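/- arXiv:0709.4127 — 2 statements merged into one kernel-verified Lean document; each statement's English description precedes it below -/
import Mathlib

section
/- Let n and k be natural numbers with n > 3 and 1 ≤ k ≤ n−3, let S be a class of singular limit ordinals, and let ⟨C_ν : ν ∈ S⟩ be a coherent square sequence on S. Assume that the set {α < ℵ_n : cf(α) = ℵ_{n−2} and α ∈ S} is stationary in ℵ_n. Then the set {β < ℵ_n : cf(β) = ℵ_k, β ∈ S, and ot(C_β) ≥ ℵ_{n−3}} is stationary in ℵ_n. -/
open Ordinal Cardinal Set

/-- `β` is a limit point of the set of ordinals `C`: `β > 0` and `β = sup (C ∩ β)`. -/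
def IsLimitPt (C : Set Ordinal) (β : Ordinal) : Prop :=
  0 < β ∧ β = sSup (C ∩ Set.Iio β)

/-- `C` is closed in `ν`: it contains all of its limit points below `ν`. -/
def ClosedIn (C : Set Ordinal) (ν : Ordinal) : Prop :=
  ∀ β < ν, IsLimitPt C β → β ∈ C

/-- `C` is unbounded (cofinal) in `ν`. -/
def UnboundedIn (C : Set Ordinal) (ν : Ordinal) : Prop :=
  sSup C = ν

/-- `C` is a closed unbounded subset of `κ`. -/
def IsClubIn (C : Set Ordinal) (κ : Ordinal) : Prop :=
  C ⊆ Set.Iio κ ∧ ClosedIn C κ ∧ UnboundedIn C κ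

/-- `T` is stationary in `κ`: it meets every club subset of `κ`. -/
def IsStationaryIn (T : Set Ordinal) (κ : Ordinal) : Prop :=
  ∀ C : Set Ordinal, IsClubIn C κ → (T ∩ C).Nonempty

/-- `ν` is a singular limit ordinal: a limit ordinal with `cf ν < ν`. -/
def IsSingLimit (ν : Ordinal) : Prop :=
  Order.IsSuccLimit ν ∧ ν.cof.ord < ν

/-- The order type of a set of ordinals. -/
noncomputable def otype (s : Set Ordinal.{0}) : Ordinal.{0} :=
  sInf {o : Ordinal.{0} | Ordinal.lift.{1, 0} o = Ordinal.type (@Subrel Ordinal.{0} (· < ·) (· ∈ s))}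

/-- `⟨C ν : ν ∈ S⟩` is a coherent square sequence on a class `S` of
singular limit ordinals. -/
def IsCoherentSquare (S : Set Ordinal) (C : Ordinal → Set Ordinal) : Prop :=
  (∀ ν ∈ S, IsSingLimit ν) ∧
  (∀ ν ∈ S, C ν ⊆ Set.Iio ν ∧ ClosedIn (C ν) ν ∧
    (Cardinal.aleph0 < ν.cof → UnboundedIn (C ν) ν)) ∧
  (∀ ν ∈ S, otype (C ν) < ν) ∧
  (∀ ν ∈ S, ∀ β < ν, IsLimitPt (C ν) β → β ∈ S ∧ C β = C ν ∩ Set.Iio β)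

section Aux

universe u

lemma unbdd_of_limitPt {s : Set Ordinal} {β : Ordinal} (h : IsLimitPt s β) :
    ∀ γ < β, ∃ x, x ∈ s ∧ γ < x ∧ x < β := by
  intro γ hγ
  obtain ⟨h0, hsup⟩ := h
  have hne : (s ∩ Set.Iio β).Nonempty := by
    by_contra hne
    rw [Set.not_nonempty_iff_eq_empty] at hne
    rw [hne, csSup_empty] at hsup
    exact h0.ne' (by simpa using hsup)
  obtain ⟨x, hx, hgx⟩ := exists_lt_of_lt_csSup hne (hsup ▸ hγ)
  exact ⟨x, hx.1, hgx, hx.2⟩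

lemma isLimitPt_of {s : Set Ordinal} {β : Ordinal} (h0 : 0 < β)
    (h : ∀ γ < β, ∃ x, x ∈ s ∧ γ < x ∧ x < β) : IsLimitPt s β := by
  refine ⟨h0, le_antisymm ?_ ?_⟩
  · refine le_of_forall_lt fun γ hγ => ?_
    obtain ⟨x, hx, h1, h2⟩ := h γ hγ
    exact h1.trans_le (le_csSup ⟨β, fun y hy => le_of_lt hy.2⟩ ⟨hx, h2⟩)
  · obtain ⟨x, hx, h1, h2⟩ := h 0 h0
    exact csSup_le ⟨x, hx, h2⟩ fun y hy => le_of_lt hy.2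

lemma unbdd_of_sSup {A : Set Ordinal} {α : Ordinal} (hsub : A ⊆ Set.Iio α) (h0 : 0 < α)
    (hsup : sSup A = α) : ∀ γ < α, ∃ x, x ∈ A ∧ γ < x ∧ x < α := by
  intro γ hγ
  have hne : A.Nonempty := by
    by_contra hne
    rw [Set.not_nonempty_iff_eq_empty] at hne
    rw [hne, csSup_empty] at hsup
    exact h0.ne' (by simpa using hsup.symm)
  obtain ⟨x, hx, hgx⟩ := exists_lt_of_lt_csSup hne (hsup ▸ hγ)
  exact ⟨x, hx, hgx, hsub hx⟩

lemma sSup_eq_of_unbdd {A : Set Ordinal} {α : Ordinal} (hsub : A ⊆ Set.Iio α)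
    (h : ∀ γ < α, ∃ x, x ∈ A ∧ γ < x) (h0 : 0 < α) : sSup A = α := by
  obtain ⟨x0, hx0, -⟩ := h 0 h0
  refine le_antisymm (csSup_le ⟨x0, hx0⟩ fun y hy => le_of_lt (hsub hy)) ?_
  refine le_of_forall_lt fun γ hγ => ?_
  obtain ⟨x, hx, hgx⟩ := h γ hγ
  exact hgx.trans_le (le_csSup ⟨α, fun y hy => le_of_lt (hsub hy)⟩ hx)

lemma aux_not_bddAbove (A : Set Ordinal) (α : Ordinal) : ¬ BddAbove (A ∪ Set.Ici α) := by
  rintro ⟨b, hb⟩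
  have h1 : α ⊔ (b + 1) ∈ A ∪ Set.Ici α := Or.inr (Set.mem_Ici.mpr (le_max_left _ _))
  have h2 : α ⊔ (b + 1) ≤ b := hb h1
  have h3 : b < b + 1 := by
    rw [Ordinal.add_one_eq_succ]; exact Order.lt_succ b
  exact absurd ((le_max_right α (b+1)).trans h2) h3.not_ge

lemma aux_enum_mem {A : Set Ordinal.{u}} {α : Ordinal.{u}}
    (hsub : A ⊆ Set.Iio α) (hA : ∀ γ < α, ∃ x, x ∈ A ∧ γ < x ∧ x < α) :
    ∀ η < α.cof.ord, enumOrd (A ∪ Set.Ici α) η ∈ A ∧ enumOrd (A ∪ Set.Ici α) η < α := by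
  intro η
  induction η using Ordinal.induction with
  | _ η IH =>
    intro hη
    have hcard : η.card < α.cof := Cardinal.lt_ord.mp hη
    set b := Ordinal.bsup.{u,u} η (fun c _ => enumOrd (A ∪ Set.Ici α) c) with hbdef
    have hbα : b < α := Ordinal.bsup_lt_ord hcard fun c hc => (IH c hc (hc.trans hη)).2
    obtain ⟨x, hxA, hbx, hxα⟩ := hA b hbα
    have hle : enumOrd (A ∪ Set.Ici α) η ≤ x :=
      enumOrd_le_of_forall_lt (Set.mem_union_left _ hxA)
        (fun c hc => lt_of_le_of_lt (Ordinal.le_bsup _ c hc) hbx)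
    have hlt : enumOrd (A ∪ Set.Ici α) η < α := hle.trans_lt hxα
    rcases enumOrd_mem (aux_not_bddAbove A α) η with h | h
    · exact ⟨h, hlt⟩
    · exact absurd (Set.mem_Ici.mp h) hlt.not_ge

lemma aux_exists_common_limitPt {s t : Set Ordinal.{0}} {α : Ordinal.{0}} (hcof : ℵ₀ < α.cof)
    (hs : ∀ γ < α, ∃ x, x ∈ s ∧ γ < x ∧ x < α)
    (ht : ∀ γ < α, ∃ x, x ∈ t ∧ γ < x ∧ x < α) :
    ∀ γ < α, ∃ β, γ < β ∧ β < α ∧ IsLimitPt s β ∧ IsLimitPt t β := by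
  intro γ hγ
  classical
  set nextT : Ordinal → Ordinal := fun x => if h : x < α then (ht x h).choose else 0 with hnT
  set nextS : Ordinal → Ordinal := fun x => if h : x < α then (hs x h).choose else 0 with hnS
  have hT : ∀ x, x < α → nextT x ∈ t ∧ x < nextT x ∧ nextT x < α := by
    intro x h
    simp only [hnT, dif_pos h]
    exact (ht x h).choose_spec
  have hS : ∀ x, x < α → nextS x ∈ s ∧ x < nextS x ∧ nextS x < α := by
    intro x h
    simp only [hnS, dif_pos h]
    exact (hs x h).choose_spec
  set g : ℕ → Ordinal := fun c => (fun y => nextS (nextT y))^[c] γ with hg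
  have hg0 : g 0 = γ := rfl
  have hgsucc : ∀ c, g (c+1) = nextS (nextT (g c)) := fun c => Function.iterate_succ_apply' _ _ _
  have hglt : ∀ c, g c < α := by
    intro c
    induction c with
    | zero => exact hγ
    | succ c ih =>
      rw [hgsucc]
      exact (hS _ (hT _ ih).2.2).2.2
  have hstep : ∀ c, g c < nextT (g c) ∧ nextT (g c) < g (c+1) ∧
      nextT (g c) ∈ t ∧ g (c+1) ∈ s := by
    intro c
    have h1 := hT _ (hglt c)
    have h2 := hS _ h1.2.2
    exact ⟨h1.2.1, by rw [hgsucc]; exact h2.2.1, h1.1, by rw [hgsucc]; exact h2.1⟩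
  have hmono : ∀ c, g c < g (c+1) := fun c => (hstep c).1.trans (hstep c).2.1
  set β := ⨆ c, g c with hβ
  have hbdd : BddAbove (Set.range g) := Ordinal.bddAbove_range g
  have hle : ∀ c, g c ≤ β := fun c => le_ciSup hbdd c
  have hltβ : ∀ c, g c < β := fun c => (hmono c).trans_le (hle (c+1))
  have hβα : β < α := Ordinal.iSup_lt_ord (by rw [Cardinal.mk_nat]; exact hcof) hglt
  have hexists : ∀ δ < β, ∃ c, δ < g c := by
    intro δ hδ
    obtain ⟨x, ⟨c, rfl⟩, hcx⟩ := exists_lt_of_lt_csSup (Set.range_nonempty g) hδ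
    exact ⟨c, hcx⟩
  have hγβ : γ < β := hg0 ▸ hltβ 0
  have h0β : 0 < β := (zero_le : (0 : Ordinal) ≤ γ).trans_lt hγβ
  refine ⟨β, hγβ, hβα, isLimitPt_of h0β ?_, isLimitPt_of h0β ?_⟩
  · intro δ hδ
    obtain ⟨c, hc⟩ := hexists δ hδ
    exact ⟨g (c+1), (hstep c).2.2.2, hc.trans (hmono c), hltβ (c+1)⟩
  · intro δ hδ
    obtain ⟨c, hc⟩ := hexists δ hδ
    exact ⟨nextT (g c), (hstep c).2.2.1, hc.trans (hstep c).1,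
      (hstep c).2.1.trans_le (hle (c+1))⟩

lemma aux_cof_ge {ρ : Ordinal.{0}} (hρ : Order.IsSuccLimit ρ) {f : Ordinal.{0} → Ordinal.{0}}
    (hf : StrictMono f) :
    ρ.cof ≤ (Ordinal.bsup.{0,0} ρ (fun c _ => f c)).cof := by
  set β := Ordinal.bsup.{0,0} ρ (fun c _ => f c) with hβ
  obtain ⟨ι, g, hg, hcard⟩ := Ordinal.exists_lsub_cof β
  have hgβ : ∀ i, g i < β := fun i => hg ▸ Ordinal.lt_lsub g i
  choose h hhρ hh using fun i => (Ordinal.lt_bsup (fun c (_ : c < ρ) => f c)).mp (hgβ i)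
  have hlsub : Ordinal.lsub h = ρ := by
    refine le_antisymm (Ordinal.lsub_le_iff.mpr hhρ) (le_of_forall_lt fun c hc => ?_)
    have hfc : f c < β := (hf (Order.lt_succ c)).trans_le
      (Ordinal.le_bsup (fun c (_ : c < ρ) => f c) _ (hρ.succ_lt hc))
    obtain ⟨i, hi⟩ := Ordinal.lt_lsub_iff.mp (hg ▸ hfc)
    have : c < h i := hf.lt_iff_lt.mp (hi.trans_lt (hh i))
    exact this.trans (Ordinal.lt_lsub h i)
  rw [Ordinal.cof_eq_sInf_lsub ρ]
  exact csInf_le ⟨0, fun x _ => zero_le⟩ ⟨ι, h, hlsub, hcard⟩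

set_option linter.deprecated false in
lemma aux_otype_ge {s : Set Ordinal.{0}} {b ρ : Ordinal.{0}} (hsub : s ⊆ Set.Iio b)
    {f : Ordinal.{0} → Ordinal.{0}} (hf : StrictMono f) (hmem : ∀ η < ρ, f η ∈ s) :
    ρ ≤ otype s := by
  set τ := Ordinal.type (@Subrel Ordinal.{0} (· < ·) (· ∈ s)) with hτ
  have hb : τ ≤ Ordinal.lift.{1,0} b := by
    rw [← Ordinal.type_lt_Iio b]
    refine Ordinal.type_le_iff'.mpr ⟨⟨⟨fun x => ⟨x.1, hsub x.2⟩, fun x y hxy => ?_⟩, ?_⟩⟩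
    · simpa [Subtype.ext_iff] using hxy
    · intro x y
      exact Iff.rfl
  obtain ⟨o₀, ho₀⟩ := Ordinal.mem_range_lift_of_le hb
  have hne : {o : Ordinal.{0} | Ordinal.lift.{1,0} o = τ}.Nonempty := ⟨o₀, ho₀⟩
  have hmemo : Ordinal.lift.{1,0} (otype s) = τ := csInf_mem hne
  rw [← Ordinal.lift_le.{1,0}, hmemo, ← Ordinal.type_lt_Iio ρ]
  refine Ordinal.type_le_iff'.mpr ⟨⟨⟨fun x => ⟨f x.1, hmem x.1 x.2⟩, fun x y hxy => ?_⟩, ?_⟩⟩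
  · simpa [Subtype.ext_iff, hf.injective.eq_iff] using hxy
  · intro x y
    exact hf.lt_iff_lt

end Aux

/-- If `{α < ℵ_n : cf α = ℵ_{n-2}, α ∈ S}` is stationary in `ℵ_n` (for `n > 3`,
`1 ≤ k ≤ n - 3`), then `{β < ℵ_n : cf β = ℵ_k, β ∈ S, ot (C_β) ≥ ℵ_{n-3}}` is
stationary in `ℵ_n`. -/
theorem squareSeq_stationary_large_order_type_cof
    (n k : ℕ) (hn : 3 < n) (hk1 : 1 ≤ k) (hk2 : k ≤ n - 3)
    (S : Set Ordinal) (C : Ordinal → Set Ordinal)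
    (hsq : IsCoherentSquare S C)
    (hstat : IsStationaryIn
      {α | α < (Cardinal.aleph (n : Ordinal)).ord ∧
           α.cof = Cardinal.aleph ((n - 2 : ℕ) : Ordinal) ∧ α ∈ S}
      (Cardinal.aleph (n : Ordinal)).ord) :
    IsStationaryIn
      {β | β < (Cardinal.aleph (n : Ordinal)).ord ∧
           β.cof = Cardinal.aleph (k : Ordinal) ∧ β ∈ S ∧
           (Cardinal.aleph ((n - 3 : ℕ) : Ordinal)).ord ≤ otype (C β)}
      (Cardinal.aleph (n : Ordinal)).ord := by
  obtain ⟨hS_sing, hS_cl, hS_ot, hS_coh⟩ := hsq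
  intro D hD
  obtain ⟨hDsub, hDclosed, hDunb⟩ := hD
  obtain ⟨m, rfl⟩ : ∃ m, n = m + 4 := ⟨n - 4, by omega⟩
  have hkm : k ≤ m + 1 := by omega
  obtain ⟨j, rfl⟩ : ∃ j, k = j + 1 := ⟨k - 1, by omega⟩
  set κ := (aleph ((m + 4 : ℕ) : Ordinal)).ord with hκdef
  have hcast : ∀ i : ℕ, ((i + 1 : ℕ) : Ordinal) = Order.succ ((i : ℕ) : Ordinal) := fun i => by
    rw [Nat.cast_add, Nat.cast_one, Ordinal.add_one_eq_succ]
  have hregn : (aleph ((m + 4 : ℕ) : Ordinal)).IsRegular := by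
    rw [show (m + 4 : ℕ) = (m + 3) + 1 from rfl, hcast (m + 3)]
    exact isRegular_aleph_succ _
  have hκcof : κ.cof = aleph ((m + 4 : ℕ) : Ordinal) := hregn.cof_eq
  have hκ0 : 0 < κ := by
    rw [← Cardinal.ord_zero]
    exact Cardinal.ord_lt_ord.mpr (aleph_pos _)
  have hposcast : ∀ i : ℕ, 0 < i → (0 : Ordinal) < ((i : ℕ) : Ordinal) := by
    intro i hi
    have : ((0 : ℕ) : Ordinal.{0}) < ((i : ℕ) : Ordinal.{0}) := by exact_mod_cast hi
    simpa using this
  have hℵ0κcof : ℵ₀ < κ.cof := by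
    rw [hκcof, ← aleph_zero]
    exact aleph_lt_aleph.mpr (hposcast (m + 4) (by omega))
  have hDub : ∀ γ < κ, ∃ x, x ∈ D ∧ γ < x ∧ x < κ := unbdd_of_sSup hDsub hκ0 hDunb
  set E := {β : Ordinal | β < κ ∧ IsLimitPt D β} with hE
  have hEclub : IsClubIn E κ := by
    refine ⟨fun β hβ => hβ.1, ?_, ?_⟩
    · intro β hβκ hβpt
      refine ⟨hβκ, isLimitPt_of hβpt.1 ?_⟩
      intro γ hγ
      obtain ⟨x, hxE, hγx, hxβ⟩ := unbdd_of_limitPt hβpt γ hγ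
      obtain ⟨y, hyD, hγy, hyx⟩ := unbdd_of_limitPt hxE.2 γ hγx
      exact ⟨y, hyD, hγy, hyx.trans hxβ⟩
    · refine sSup_eq_of_unbdd (fun β hβ => hβ.1) ?_ hκ0
      intro γ hγ
      obtain ⟨β, h1, h2, h3, -⟩ := aux_exists_common_limitPt hℵ0κcof hDub hDub γ hγ
      exact ⟨β, ⟨h2, h3⟩, h1⟩
  obtain ⟨α₀, hα₀T, hα₀E⟩ := hstat E hEclub
  obtain ⟨hα₀κ, hα₀cof, hα₀S⟩ := hα₀T
  have hα₀pt : IsLimitPt D α₀ := hα₀E.2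
  have e2 : ((m + 4 - 2 : ℕ) : Ordinal) = ((m + 2 : ℕ) : Ordinal) := by congr 1
  have hα₀cof' : α₀.cof = aleph ((m + 2 : ℕ) : Ordinal) := by rw [hα₀cof, e2]
  have hα₀lim : Order.IsSuccLimit α₀ := (hS_sing α₀ hα₀S).1
  have hα₀0 : 0 < α₀ := hα₀lim.pos
  obtain ⟨hCsub, hCclosed, hCunb⟩ := hS_cl α₀ hα₀S
  have hℵ0α : ℵ₀ < α₀.cof := by
    rw [hα₀cof', ← aleph_zero]
    exact aleph_lt_aleph.mpr (hposcast (m + 2) (by omega))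
  have hCub := unbdd_of_sSup hCsub hα₀0 (hCunb hℵ0α)
  have hDubα : ∀ γ < α₀, ∃ x, x ∈ D ∧ γ < x ∧ x < α₀ := unbdd_of_limitPt hα₀pt
  set L := {x : Ordinal | x < α₀ ∧ IsLimitPt (C α₀) x ∧ IsLimitPt D x} with hLdef
  have hLub : ∀ γ < α₀, ∃ x, x ∈ L ∧ γ < x ∧ x < α₀ := by
    intro γ hγ
    obtain ⟨β, h1, h2, h3, h4⟩ := aux_exists_common_limitPt hℵ0α hCub hDubα γ hγ
    exact ⟨β, ⟨h2, h3, h4⟩, h1, h2⟩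
  have hLsub : L ⊆ Set.Iio α₀ := fun x hx => hx.1
  have henum := aux_enum_mem hLsub hLub
  have hnb := aux_not_bddAbove L α₀
  set ν3 := (aleph ((m + 1 : ℕ) : Ordinal)).ord with hν3
  set νk := (aleph ((j + 1 : ℕ) : Ordinal)).ord with hνkdef
  have hregk : (aleph ((j + 1 : ℕ) : Ordinal)).IsRegular := by
    rw [hcast j]; exact isRegular_aleph_succ _
  have hνklim : Order.IsSuccLimit νk := Cardinal.isSuccLimit_ord (aleph0_le_aleph _)
  have hkle : aleph ((j + 1 : ℕ) : Ordinal) ≤ aleph ((m + 1 : ℕ) : Ordinal) :=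
    aleph_le_aleph.mpr (by exact_mod_cast hkm)
  have hmlt : aleph ((m + 1 : ℕ) : Ordinal) < aleph ((m + 2 : ℕ) : Ordinal) :=
    aleph_lt_aleph.mpr (by exact_mod_cast (by omega : (m + 1 : ℕ) < m + 2))
  have hidx : ∀ c < νk, ν3 + c < α₀.cof.ord := by
    intro c hc
    rw [hα₀cof', Cardinal.lt_ord, Ordinal.card_add]
    have h1 : ν3.card = aleph ((m + 1 : ℕ) : Ordinal) := card_ord _
    have h2 : c.card ≤ aleph ((m + 1 : ℕ) : Ordinal) := by
      have h3 := Ordinal.card_le_card hc.le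
      rw [card_ord] at h3
      exact h3.trans hkle
    exact Cardinal.add_lt_of_lt (aleph0_le_aleph _) (h1 ▸ hmlt) (h2.trans_lt hmlt)
  set f : Ordinal → Ordinal := fun c => enumOrd (L ∪ Set.Ici α₀) (ν3 + c) with hfdef
  have hfmono : StrictMono f := fun x y h =>
    enumOrd_strictMono hnb ((add_lt_add_iff_left ν3).mpr h)
  set β := Ordinal.bsup.{0,0} νk (fun c _ => f c) with hβdef
  have hfc : ∀ c, c < νk → f c ∈ L ∧ f c < α₀ := fun c hc => henum _ (hidx c hc)
  have hβα : β < α₀ := by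
    refine Ordinal.bsup_lt_ord ?_ fun c hc => (hfc c hc).2
    rw [card_ord, hα₀cof']
    exact hkle.trans_lt hmlt
  have hflt : ∀ c, c < νk → f c < β := fun c hc =>
    (hfmono (Order.lt_succ c)).trans_le (Ordinal.le_bsup _ _ (hνklim.succ_lt hc))
  have hβ0 : 0 < β := (zero_le : (0 : Ordinal) ≤ f 0).trans_lt (hflt 0 hνklim.pos)
  have hβCpt : IsLimitPt (C α₀) β := by
    refine isLimitPt_of hβ0 fun γ hγ => ?_
    obtain ⟨c, hc, hγc⟩ := (Ordinal.lt_bsup _).mp hγ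
    have hm := hfc c hc
    exact ⟨f c, hCclosed _ hm.2 hm.1.2.1, hγc, hflt c hc⟩
  have hβDpt : IsLimitPt D β := by
    refine isLimitPt_of hβ0 fun γ hγ => ?_
    obtain ⟨c, hc, hγc⟩ := (Ordinal.lt_bsup _).mp hγ
    obtain ⟨y, hyD, hγy, hyc⟩ := unbdd_of_limitPt (hfc c hc).1.2.2 γ hγc
    exact ⟨y, hyD, hγy, hyc.trans (hflt c hc)⟩
  obtain ⟨hβS, hCβ⟩ := hS_coh α₀ hα₀S β hβα hβCpt
  have hβκ : β < κ := hβα.trans hα₀κ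
  have hβD : β ∈ D := hDclosed β hβκ hβDpt
  have hcof1 : β.cof ≤ aleph ((j + 1 : ℕ) : Ordinal) := by
    have h4 := Ordinal.cof_bsup_le hflt
    rwa [card_ord] at h4
  have hcof2 : aleph ((j + 1 : ℕ) : Ordinal) ≤ β.cof := by
    have h5 := aux_cof_ge hνklim hfmono
    rwa [hregk.cof_eq] at h5
  have hot : ν3 ≤ otype (C β) := by
    rw [hCβ]
    refine aux_otype_ge (b := β) Set.inter_subset_right (enumOrd_strictMono hnb) ?_
    intro η hη
    have hη' : η < α₀.cof.ord := by
      have h6 : ν3 < α₀.cof.ord := by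
        rw [hα₀cof']
        exact Cardinal.ord_lt_ord.mpr hmlt
      exact hη.trans h6
    have hm := henum η hη'
    refine ⟨hCclosed _ hm.2 hm.1.2.1, ?_⟩
    have h7 : enumOrd (L ∪ Set.Ici α₀) η < f 0 := by
      apply enumOrd_strictMono hnb
      rw [add_zero]
      exact hη
    exact h7.trans (hflt 0 hνklim.pos)
  have e3 : ((m + 4 - 3 : ℕ) : Ordinal) = ((m + 1 : ℕ) : Ordinal) := by congr 1
  refine ⟨β, ⟨hβκ, le_antisymm hcof1 hcof2, hβS, ?_⟩, hβD⟩
  rw [e3]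
  exact hot
end

section
/- Suppose A is a class of ordinals such that every singular cardinal belongs to A and, for every infinite cardinal κ, the set A ∩ κ⁺ is closed and unbounded in the successor cardinal κ⁺. Let S = {ν ∈ A : ν is a singular limit ordinal} and suppose ⟨C_ν : ν ∈ S⟩ is a coherent square sequence on S. Then there exists a system ⟨C′_β : β a singular limit ordinal⟩ defined on ALL singular limit ordinals such that: (a) C′_β is a closed cofinal subset of β; (b) ot(C′_β) < β; (c) if β̄ is a limit point of C′_β then β̄ is a singular limit ordinal and C′_{β̄} = C′_β ∩ β̄ (i.e., a Global Square sequence). -/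
open Ordinal Cardinal Set
open scoped Classical

lemma bddAbove_of_subset_Iio {s : Set Ordinal} {b : Ordinal} (h : s ⊆ Set.Iio b) :
    BddAbove s := ⟨b, fun x hx => (h hx).le⟩

lemma sSup_le_forall {s : Set Ordinal} {a : Ordinal} (h : ∀ x ∈ s, x ≤ a) : sSup s ≤ a := by
  rcases s.eq_empty_or_nonempty with rfl | hne
  · simpa [csSup_empty] using Ordinal.zero_le a
  · exact csSup_le hne h

lemma exists_gt_of_lt_sSup {s : Set Ordinal} {x : Ordinal} (h : x < sSup s) :
    ∃ y ∈ s, x < y := by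
  rcases s.eq_empty_or_nonempty with rfl | hne
  · simp [csSup_empty] at h
  · exact exists_lt_of_lt_csSup hne h

lemma isLimit_of_isLimitPt {s : Set Ordinal} {x : Ordinal} (h : IsLimitPt s x) :
    Order.IsSuccLimit x := by
  obtain ⟨h0, heq⟩ := h
  rcases Ordinal.zero_or_succ_or_isSuccLimit x with rfl | ⟨y, rfl⟩ | hl
  · exact absurd h0 (lt_irrefl 0)
  · exfalso
    have hle : sSup (s ∩ Set.Iio (Order.succ y)) ≤ y :=
      sSup_le_forall (fun z hz => Order.lt_succ_iff.1 hz.2)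
    rw [← heq] at hle
    exact absurd hle (by simp [Order.lt_succ_iff])
  · exact hl

/-! ### The gap filling system -/

noncomputable def Sv (b : Ordinal.{0} → Ordinal.{0}) (β i : Ordinal.{0}) : Ordinal.{0} :=
  sSup (b '' Set.Iio i ∩ Set.Iio β)

def Gset (μ ηs : Ordinal.{0}) (b : Ordinal.{0} → Ordinal.{0}) (β : Ordinal.{0}) : Set Ordinal.{0} :=
  {x | ηs < x ∧ x < β ∧ ∃ i < μ, x = Sv b β i}

section Gap

variable {μ θ ηs β : Ordinal.{0}} {b : Ordinal.{0} → Ordinal.{0}}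

lemma Sv_le (b : Ordinal.{0} → Ordinal.{0}) (β i : Ordinal.{0}) : Sv b β i ≤ β :=
  sSup_le_forall (fun _ hx => hx.2.le)

lemma Sv_mem_le {z i : Ordinal} (hz : z ∈ b '' Set.Iio i ∩ Set.Iio β) : z ≤ Sv b β i :=
  le_csSup (bddAbove_of_subset_Iio (fun _ hx => hx.2)) hz

lemma Sv_mono {i j : Ordinal} (h : i ≤ j) : Sv b β i ≤ Sv b β j := by
  refine sSup_le_forall (fun z hz => Sv_mem_le ?_)
  exact ⟨image_mono (Set.Iio_subset_Iio h) hz.1, hz.2⟩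

lemma Sv_zero (b : Ordinal.{0} → Ordinal.{0}) (β : Ordinal.{0}) : Sv b β 0 = 0 := by
  have h1 : Set.Iio (0 : Ordinal.{0}) = ∅ := by ext x; simp
  rw [Sv, h1, Set.image_empty, Set.empty_inter, csSup_empty]
  rfl

lemma Sv_succ_le {i : Ordinal} : Sv b β (i + 1) ≤ max (Sv b β i) (b i) := by
  refine sSup_le_forall (fun z hz => ?_)
  obtain ⟨⟨ζ, hζ, rfl⟩, hzβ⟩ := hz
  have hle : ζ ≤ i := by
    have h' : ζ < i + 1 := hζ
    rwa [Ordinal.add_one_eq_succ, Order.lt_succ_iff] at h'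
  rcases lt_or_eq_of_le hle with h | h
  · exact le_trans (Sv_mem_le ⟨⟨ζ, h, rfl⟩, hzβ⟩) (le_max_left _ _)
  · rw [h]; exact le_max_right _ _

lemma le_Sv_succ {i : Ordinal} (h : b i < β) : b i ≤ Sv b β (i + 1) :=
  Sv_mem_le ⟨⟨i, by simp, rfl⟩, h⟩

lemma Sv_limit_le {i x : Ordinal} (hi : Order.IsSuccLimit i) (h : ∀ j < i, Sv b β j ≤ x) :
    Sv b β i ≤ x := by
  refine sSup_le_forall (fun z hz => ?_)
  obtain ⟨⟨ζ, hζ, rfl⟩, hzβ⟩ := hz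
  exact le_trans (Sv_mem_le ⟨⟨ζ, Order.lt_succ ζ, rfl⟩, hzβ⟩)
    (by simpa using h _ (hi.succ_lt hζ))

/-- Key unboundedness lemma. -/
lemma Gset_unbounded (hμ : Order.IsSuccLimit μ) (hb : ∀ ζ < μ, b ζ < θ)
    (hsur : ∀ y < θ, ∃ ζ < μ, b ζ = y) (hβθ : β < θ) (hβ : Order.IsSuccLimit β)
    {x : Ordinal} (hx1 : ηs ≤ x) (hx2 : x < β) :
    ∃ y ∈ Gset μ ηs b β, x < y := by
  -- there is some i < μ with x < Sv b β i
  have hwit : ∃ i, i < μ ∧ x < Sv b β i := by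
    obtain ⟨ζ, hζμ, hζ⟩ := hsur (x + 1) (lt_trans (hβ.succ_lt (by simpa using hx2)) hβθ)
    refine ⟨ζ + 1, hμ.succ_lt (by simpa using hζμ), ?_⟩
    have : b ζ ≤ Sv b β (ζ + 1) := le_Sv_succ (by rw [hζ]; exact hβ.succ_lt (by simpa using hx2))
    rw [hζ] at this
    exact lt_of_lt_of_le (Order.lt_succ x) (by simpa using this)
  set T : Set Ordinal := {i | x < Sv b β i} with hT
  have hTne : T.Nonempty := ⟨hwit.choose, hwit.choose_spec.2⟩
  set i₀ := sInf T with hi₀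
  have hi₀T : i₀ ∈ T := csInf_mem hTne
  have hi₀min : ∀ i < i₀, Sv b β i ≤ x := by
    intro i hi
    by_contra hcon
    exact absurd (csInf_le (OrderBot.bddBelow T) (show i ∈ T from not_le.1 hcon)) (not_le.2 hi)
  have hi₀μ : i₀ ≤ hwit.choose := csInf_le (OrderBot.bddBelow T) hwit.choose_spec.2
  have hi₀μ' : i₀ < μ := lt_of_le_of_lt hi₀μ hwit.choose_spec.1
  -- i₀ is a successor
  rcases Ordinal.zero_or_succ_or_isSuccLimit i₀ with h0 | ⟨j₀, hj₀⟩ | hlim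
  · exfalso
    have : x < Sv b β 0 := h0 ▸ hi₀T
    rw [Sv_zero] at this
    exact absurd this (not_lt.2 (zero_le (a := x)))
  · -- successor case: the witness is b j₀
    have hj₀lt : j₀ < i₀ := hj₀ ▸ Order.lt_succ j₀
    have hSvj₀ : Sv b β j₀ ≤ x := hi₀min _ hj₀lt
    have hi₀eq : Sv b β i₀ ≤ max (Sv b β j₀) (b j₀) := by
      rw [← hj₀, ← Ordinal.add_one_eq_succ]; exact Sv_succ_le
    have hbβ : b j₀ < β := by
      by_contra hcon
      -- then all elements of the sup defining Sv i₀ are ≤ Sv j₀ ≤ x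
      have : Sv b β i₀ ≤ x := by
        rw [← hj₀, ← Ordinal.add_one_eq_succ]
        refine sSup_le_forall (fun z hz => ?_)
        obtain ⟨⟨ζ, hζ, rfl⟩, hzβ⟩ := hz
        have hle : ζ ≤ j₀ := by
          have h' : ζ < j₀ + 1 := hζ
          rwa [Ordinal.add_one_eq_succ, Order.lt_succ_iff] at h'
        rcases lt_or_eq_of_le hle with h | h
        · exact le_trans (Sv_mem_le ⟨⟨ζ, h, rfl⟩, hzβ⟩) hSvj₀
        · exact absurd hzβ (by rw [h]; exact hcon)
      exact absurd hi₀T (not_lt.2 this)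
    refine ⟨Sv b β i₀, ⟨lt_of_le_of_lt hx1 hi₀T, ?_, i₀, hi₀μ', rfl⟩, hi₀T⟩
    calc Sv b β i₀ ≤ max (Sv b β j₀) (b j₀) := hi₀eq
    _ < β := max_lt (lt_of_le_of_lt hSvj₀ hx2) hbβ
  · exfalso
    exact absurd hi₀T (not_lt.2 (Sv_limit_le hlim hi₀min))

end Gap

section Gap2

variable {μ θ ηs β : Ordinal.{0}} {b : Ordinal.{0} → Ordinal.{0}}

/-- Key analysis of a limit point of the gap system. -/
lemma Gset_key (hμ : Order.IsSuccLimit μ) (hb : ∀ ζ < μ, b ζ < θ)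
    (hsur : ∀ y < θ, ∃ ζ < μ, b ζ = y) (hβθ : β < θ) (hβ : Order.IsSuccLimit β)
    {x : Ordinal} (hxβ : x < β) (hlp : IsLimitPt (Gset μ ηs b β) x) :
    ηs < x ∧ ∃ j < μ, Order.IsSuccLimit j ∧ Sv b β j = x ∧ ∀ i < j, Sv b β i < x := by
  obtain ⟨hx0, hxeq⟩ := hlp
  -- some element of Gset below x
  have hne : (Gset μ ηs b β ∩ Set.Iio x).Nonempty := by
    by_contra hcon
    rw [Set.not_nonempty_iff_eq_empty] at hcon
    rw [hcon, csSup_empty] at hxeq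
    exact absurd hx0 (by rw [hxeq]; exact lt_irrefl _)
  obtain ⟨z, hzG, hzx⟩ := hne
  have hηx : ηs < x := lt_trans hzG.1 hzx
  -- some i < μ with x ≤ Sv b β i
  have hwit : ∃ i, i < μ ∧ x ≤ Sv b β i := by
    obtain ⟨y, hyG, hxy⟩ := Gset_unbounded hμ hb hsur hβθ hβ hηx.le hxβ
    obtain ⟨i, hiμ, hyi⟩ := hyG.2.2
    exact ⟨i, hiμ, by rw [← hyi]; exact hxy.le⟩
  set T : Set Ordinal := {i | x ≤ Sv b β i} with hT
  have hTne : T.Nonempty := ⟨hwit.choose, hwit.choose_spec.2⟩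
  set j := sInf T with hj
  have hjT : x ≤ Sv b β j := csInf_mem hTne
  have hjmin : ∀ i < j, Sv b β i < x := by
    intro i hi
    by_contra hcon
    exact absurd (csInf_le (OrderBot.bddBelow T) (show i ∈ T from not_lt.1 hcon)) (not_le.2 hi)
  have hjμ : j < μ := lt_of_le_of_lt (csInf_le (OrderBot.bddBelow T) hwit.choose_spec.2)
    hwit.choose_spec.1
  -- j is a limit
  rcases Ordinal.zero_or_succ_or_isSuccLimit j with h0 | ⟨j₀, hj₀⟩ | hlim
  · exfalso
    have := hjT
    rw [h0, Sv_zero] at this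
    exact absurd (lt_of_lt_of_le hx0 this) (lt_irrefl 0)
  · exfalso
    have hj₀lt : j₀ < j := hj₀ ▸ Order.lt_succ j₀
    -- every element of Gset ∩ Iio x is ≤ Sv b β j₀
    have hbound : sSup (Gset μ ηs b β ∩ Set.Iio x) ≤ Sv b β j₀ := by
      refine sSup_le_forall (fun z' hz' => ?_)
      obtain ⟨⟨hz1, hz2, i, hiμ, hzi⟩, hz3⟩ := hz'
      have hij : i < j := by
        by_contra hcon
        have : Sv b β j ≤ Sv b β i := Sv_mono (not_lt.1 hcon)
        exact absurd (lt_of_lt_of_le hz3 (hjT.trans this)) (by rw [← hzi]; exact lt_irrefl _)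
      have : i ≤ j₀ := by
        rw [← hj₀, Order.lt_succ_iff] at hij
        exact hij
      rw [hzi]; exact Sv_mono this
    rw [← hxeq] at hbound
    exact absurd (lt_of_le_of_lt hbound (hjmin _ hj₀lt)) (lt_irrefl x)
  · refine ⟨hηx, j, hjμ, hlim, le_antisymm (Sv_limit_le hlim (fun i hi => (hjmin i hi).le)) hjT,
      hjmin⟩

lemma Gset_closedIn (hμ : Order.IsSuccLimit μ) (hb : ∀ ζ < μ, b ζ < θ)
    (hsur : ∀ y < θ, ∃ ζ < μ, b ζ = y) (hβθ : β < θ) (hβ : Order.IsSuccLimit β) {x : Ordinal}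
    (hxβ : x < β) (hlp : IsLimitPt (Gset μ ηs b β) x) : x ∈ Gset μ ηs b β := by
  obtain ⟨hηx, j, hjμ, _, hSvj, _⟩ := Gset_key hμ hb hsur hβθ hβ hxβ hlp
  exact ⟨hηx, hxβ, j, hjμ, hSvj.symm⟩

/-- Coherence of the gap system. -/
lemma Gset_trace (hμ : Order.IsSuccLimit μ) (hb : ∀ ζ < μ, b ζ < θ)
    (hsur : ∀ y < θ, ∃ ζ < μ, b ζ = y) (hβθ : β < θ) (hβ : Order.IsSuccLimit β) {x : Ordinal}
    (hxβ : x < β) (hlp : IsLimitPt (Gset μ ηs b β) x) :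
    Gset μ ηs b x = Gset μ ηs b β ∩ Set.Iio x := by
  obtain ⟨hηx, j, hjμ, hjlim, hSvj, hjmin⟩ := Gset_key hμ hb hsur hβθ hβ hxβ hlp
  -- t1 : for i < j the two Sv's agree
  have t1 : ∀ i < j, Sv b x i = Sv b β i := by
    intro i hij
    have hset : b '' Set.Iio i ∩ Set.Iio x = b '' Set.Iio i ∩ Set.Iio β := by
      ext z
      constructor
      · rintro ⟨hz1, hz2⟩
        exact ⟨hz1, lt_trans hz2 hxβ⟩
      · rintro ⟨hz1, hz2⟩
        exact ⟨hz1, lt_of_le_of_lt (Sv_mem_le ⟨hz1, hz2⟩) (hjmin i hij)⟩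
    rw [Sv, Sv, hset]
  -- t2 : for j ≤ i, Sv b x i = x
  have t2 : ∀ i, j ≤ i → Sv b x i = x := by
    intro i hji
    refine le_antisymm (Sv_le b x i) ?_
    have key : Sv b β j ≤ Sv b x i := by
      refine sSup_le_forall (fun z hz => ?_)
      obtain ⟨⟨ζ, hζj, rfl⟩, hzβ⟩ := hz
      have hζ1 : ζ + 1 < j := by
        rw [Ordinal.add_one_eq_succ]; exact hjlim.succ_lt hζj
      have hz_le : b ζ ≤ Sv b β (ζ + 1) := le_Sv_succ hzβ
      have hz_lt_x : b ζ < x := lt_of_le_of_lt hz_le (hjmin _ hζ1)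
      have hζself : ζ < ζ + 1 := by
        rw [Ordinal.add_one_eq_succ]; exact Order.lt_succ ζ
      exact Sv_mem_le ⟨⟨ζ, lt_of_lt_of_le hζself (hζ1.le.trans hji), rfl⟩, hz_lt_x⟩
    exact (le_of_eq hSvj.symm).trans key
  -- now the set equality
  ext y
  constructor
  · rintro ⟨hy1, hy2, i, hiμ, hyi⟩
    rcases lt_or_ge i j with hij | hij
    · rw [t1 i hij] at hyi
      exact ⟨⟨hy1, lt_trans hy2 hxβ, i, hiμ, hyi⟩, hy2⟩
    · exfalso
      rw [t2 i hij] at hyi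
      exact absurd hy2 (by rw [hyi]; exact lt_irrefl x)
  · rintro ⟨⟨hy1, hy2, i, hiμ, hyi⟩, hy3⟩
    have hij : i < j := by
      by_contra hcon
      have : Sv b β j ≤ Sv b β i := Sv_mono (not_lt.1 hcon)
      rw [hSvj] at this
      exact absurd (lt_of_lt_of_le hy3 this) (by rw [← hyi]; exact lt_irrefl _)
    exact ⟨hy1, hy3, i, hiμ, by rw [t1 i hij]; exact hyi⟩

end Gap2

theorem otype_le_of_mono {s : Set Ordinal} {c : Ordinal} (f : Ordinal → Ordinal)
    (hmono : ∀ x ∈ s, ∀ y ∈ s, x < y → f x < f y) (hlt : ∀ x ∈ s, f x < c) :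
    otype s ≤ c := by
  have emb : @Subrel Ordinal (· < ·) (· ∈ s) ↪r @Subrel Ordinal (· < ·) (· ∈ Set.Iio c) := by
    refine RelEmbedding.ofMonotone (fun x => ⟨f x.1, hlt _ x.2⟩) ?_
    intro x y h
    exact hmono _ x.2 _ y.2 h
  have h1 : Ordinal.type (@Subrel Ordinal (· < ·) (· ∈ s)) ≤ Ordinal.lift.{1,0} c := by
    calc Ordinal.type (@Subrel Ordinal (· < ·) (· ∈ s))
        ≤ Ordinal.type (@Subrel Ordinal (· < ·) (· ∈ Set.Iio c)) := emb.ordinal_type_le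
    _ = Ordinal.lift.{1,0} c := Ordinal.typein_ordinal c
  obtain ⟨o, ho⟩ := Ordinal.mem_range_lift_of_le h1
  have hmem : o ∈ {o : Ordinal.{0} |
      Ordinal.lift.{1, 0} o = Ordinal.type (@Subrel Ordinal.{0} (· < ·) (· ∈ s))} := ho
  exact (csInf_le (OrderBot.bddBelow _) hmem).trans (Ordinal.lift_le.1 (ho ▸ h1))

section Gap3

variable {μ θ ηs β : Ordinal.{0}} {b : Ordinal.{0} → Ordinal.{0}}

lemma Gset_otype : otype (Gset μ ηs b β) ≤ μ := by
  refine otype_le_of_mono (fun y => sInf {i | i < μ ∧ Sv b β i = y}) ?_ ?_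
  · rintro y ⟨_, _, i, hiμ, hyi⟩ y' ⟨_, _, i', hiμ', hyi'⟩ hlt
    have hne : {i | i < μ ∧ Sv b β i = y}.Nonempty := ⟨i, hiμ, hyi.symm⟩
    have hne' : {i | i < μ ∧ Sv b β i = y'}.Nonempty := ⟨i', hiμ', hyi'.symm⟩
    have p := csInf_mem hne
    have p' := csInf_mem hne'
    by_contra hcon
    have hle : sInf {i | i < μ ∧ Sv b β i = y'} ≤ sInf {i | i < μ ∧ Sv b β i = y} :=
      not_lt.1 hcon
    have : y' ≤ y := by
      rw [← p.2, ← p'.2]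
      exact Sv_mono hle
    exact absurd hlt (not_lt.2 this)
  · rintro y ⟨_, _, i, hiμ, hyi⟩
    exact (csInf_mem (⟨i, hiμ, hyi.symm⟩ :
      Set.Nonempty {i | i < μ ∧ Sv b β i = y})).1

lemma Gset_sSup (hμ : Order.IsSuccLimit μ) (hb : ∀ ζ < μ, b ζ < θ)
    (hsur : ∀ y < θ, ∃ ζ < μ, b ζ = y) (hβθ : β < θ) (hβ : Order.IsSuccLimit β)
    (hη : ηs < β) : sSup (Gset μ ηs b β) = β := by
  refine le_antisymm (sSup_le_forall fun x hx => hx.2.1.le) ?_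
  by_contra hcon
  have hlt : sSup (Gset μ ηs b β) < β := not_le.1 hcon
  have hmax : max ηs (sSup (Gset μ ηs b β)) < β := max_lt hη hlt
  obtain ⟨y, hyG, hy⟩ := Gset_unbounded hμ hb hsur hβθ hβ (le_max_left _ _) hmax
  have : y ≤ sSup (Gset μ ηs b β) :=
    le_csSup (bddAbove_of_subset_Iio (fun z hz => hz.2.1)) hyG
  exact absurd (lt_of_le_of_lt (le_max_right ηs _) hy) (not_lt.2 this)

lemma Gset_cof (hμ : Order.IsSuccLimit μ) (hb : ∀ ζ < μ, b ζ < θ)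
    (hsur : ∀ y < θ, ∃ ζ < μ, b ζ = y) (hβθ : β < θ) (hβ : Order.IsSuccLimit β)
    {x : Ordinal} (hxβ : x < β) (hlp : IsLimitPt (Gset μ ηs b β) x) :
    x.cof ≤ μ.card := by
  haveI : IsWellOrder μ.ToType (· < ·) := isWellOrder_lt
  obtain ⟨hηx, j, hjμ, hjlim, hSvj, hjmin⟩ := Gset_key hμ hb hsur hβθ hβ hxβ hlp
  have hx0 : 0 < x := hlp.1
  set f : μ.ToType → Ordinal :=
    fun t => if Sv b β (Ordinal.typein (α := μ.ToType) (· < ·) t) < x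
      then Sv b β (Ordinal.typein (α := μ.ToType) (· < ·) t) else 0 with hf
  have hflt : ∀ t, f t < x := by
    intro t
    by_cases h : Sv b β (Ordinal.typein (α := μ.ToType) (· < ·) t) < x
    · simpa [hf, h] using h
    · simpa [hf, h] using hx0
  have hsup : iSup f = x := by
    refine le_antisymm (sSup_le_forall (by rintro z ⟨t, rfl⟩; exact (hflt t).le)) ?_
    by_contra hcon
    have hsupx : iSup f < x := not_le.1 hcon
    have hex : ∃ i < j, iSup f < Sv b β i := by
      by_contra hcon2
      push_neg at hcon2
      have : Sv b β j ≤ iSup f := Sv_limit_le hjlim hcon2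
      rw [hSvj] at this
      exact absurd this (not_le.2 hsupx)
    obtain ⟨i, hij, hi⟩ := hex
    have hty : i < Ordinal.type ((· < ·) : μ.ToType → μ.ToType → Prop) := by
      rw [Ordinal.type_toType]; exact lt_trans hij hjμ
    obtain ⟨t, ht⟩ := Ordinal.typein_surj ((· < ·) : μ.ToType → μ.ToType → Prop) hty
    have hft : f t = Sv b β i := by
      rw [hf]; simp only [ht]
      rw [if_pos (hjmin i hij)]
    have : f t ≤ iSup f := le_csSup (by exact ⟨x, by rintro z ⟨t', rfl⟩; exact (hflt t').le⟩)
      ⟨t, rfl⟩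
    rw [hft] at this
    exact absurd (lt_of_le_of_lt this hi) (lt_irrefl _)
  have := Ordinal.cof_iSup_le (f := f) (by rw [hsup]; exact hflt)
  rw [hsup, Cardinal.mk_toType] at this
  exact this

end Gap3

/-! ### Ladders: cofinal ω-sequences of successor ordinals, with no limit points -/

theorem exists_ladder (β : Ordinal.{0}) (hβ : Order.IsSuccLimit β) (hcof : β.cof = Cardinal.aleph0) :
    ∃ L : Set Ordinal.{0}, L ⊆ Set.Iio β ∧ sSup L = β ∧ otype L ≤ Ordinal.omega0 ∧
      ∀ γ < β, ¬ IsLimitPt L γ := by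
  obtain ⟨ι, f0, hlsub, hmk⟩ := Ordinal.exists_lsub_cof β
  rw [hcof] at hmk
  have : Nonempty (ℕ ≃ ι) := Cardinal.eq.1 (Cardinal.mk_nat.trans hmk.symm)
  obtain ⟨e⟩ := this
  set f : ℕ → Ordinal := fun n => f0 (e n) with hfdef
  have hflt : ∀ n, f n < β := fun n => hlsub ▸ Ordinal.lt_lsub f0 (e n)
  have hcofin : ∀ x < β, ∃ n, x ≤ f n := by
    intro x hx
    rw [← hlsub] at hx
    obtain ⟨i, hi⟩ := Ordinal.lt_lsub_iff.1 hx
    exact ⟨e.symm i, by simpa [hfdef] using hi⟩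
  -- build the strictly increasing ladder
  set g : ℕ → Ordinal := fun n => Nat.rec (f 0 + 1) (fun n ih => max ih (f (n + 1)) + 1) n
    with hgdef
  have hg0 : g 0 = f 0 + 1 := rfl
  have hgsucc : ∀ n, g (n + 1) = max (g n) (f (n + 1)) + 1 := fun n => rfl
  have hglt : ∀ n, g n < β := by
    intro n
    induction n with
    | zero => rw [hg0, Ordinal.add_one_eq_succ]; exact hβ.succ_lt (hflt 0)
    | succ n ih =>
        rw [hgsucc, Ordinal.add_one_eq_succ]
        exact hβ.succ_lt (max_lt ih (hflt (n+1)))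
  have hgmono : StrictMono g := by
    apply strictMono_nat_of_lt_succ
    intro n
    rw [hgsucc, Ordinal.add_one_eq_succ]
    exact lt_of_le_of_lt (le_max_left _ _) (Order.lt_succ _)
  have hgf : ∀ n, f n < g n := by
    intro n
    cases n with
    | zero => rw [hg0, Ordinal.add_one_eq_succ]; exact Order.lt_succ _
    | succ n =>
        rw [hgsucc, Ordinal.add_one_eq_succ]
        exact lt_of_le_of_lt (le_max_right _ _) (Order.lt_succ _)
  have hgcof : ∀ x < β, ∃ n, x < g n := by
    intro x hx
    obtain ⟨n, hn⟩ := hcofin x hx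
    exact ⟨n, lt_of_le_of_lt hn (hgf n)⟩
  refine ⟨Set.range g, by rintro z ⟨n, rfl⟩; exact hglt n, ?_, ?_, ?_⟩
  · -- sSup = β
    refine le_antisymm (sSup_le_forall (by rintro z ⟨n, rfl⟩; exact (hglt n).le)) ?_
    by_contra hcon
    have hlt : sSup (Set.range g) < β := not_le.1 hcon
    obtain ⟨n, hn⟩ := hgcof _ hlt
    exact absurd (le_csSup (bddAbove_of_subset_Iio (by rintro z ⟨m, rfl⟩; exact hglt m))
      (show g n ∈ Set.range g from ⟨n, rfl⟩)) (not_le.2 hn)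
  · -- otype ≤ ω
    refine otype_le_of_mono
      (fun x => sInf {o : Ordinal | ∃ n : ℕ, (n : Ordinal) = o ∧ g n = x}) ?_ ?_
    · rintro x ⟨nx, rfl⟩ y ⟨ny, rfl⟩ hlt
      have hnex : {o : Ordinal | ∃ n : ℕ, (n : Ordinal) = o ∧ g n = g nx}.Nonempty :=
        ⟨nx, nx, rfl, rfl⟩
      have hney : {o : Ordinal | ∃ n : ℕ, (n : Ordinal) = o ∧ g n = g ny}.Nonempty :=
        ⟨ny, ny, rfl, rfl⟩
      obtain ⟨mx, hmx, hgx⟩ := csInf_mem hnex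
      obtain ⟨my, hmy, hgy⟩ := csInf_mem hney
      show sInf {o : Ordinal | ∃ n : ℕ, (n : Ordinal) = o ∧ g n = g nx} <
        sInf {o : Ordinal | ∃ n : ℕ, (n : Ordinal) = o ∧ g n = g ny}
      rw [← hmx, ← hmy]
      have hmm : mx < my := by
        by_contra hcon
        have hle := hgmono.monotone (not_lt.1 hcon)
        rw [hgx, hgy] at hle
        exact absurd hlt (not_lt.2 hle)
      exact_mod_cast hmm
    · rintro x ⟨n, rfl⟩
      obtain ⟨m, hm, -⟩ := csInf_mem (⟨n, n, rfl, rfl⟩ :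
        Set.Nonempty {o : Ordinal | ∃ k : ℕ, (k : Ordinal) = o ∧ g k = g n})
      show sInf {o : Ordinal | ∃ k : ℕ, (k : Ordinal) = o ∧ g k = g n} < Ordinal.omega0
      rw [← hm]
      exact Ordinal.nat_lt_omega0 m
  · -- no limit points below β
    rintro γ hγβ ⟨hγ0, hγeq⟩
    have hne : (Set.range g ∩ Set.Iio γ).Nonempty := by
      by_contra hcon
      rw [Set.not_nonempty_iff_eq_empty] at hcon
      rw [hcon, csSup_empty] at hγeq
      exact absurd hγ0 (by rw [hγeq]; exact lt_irrefl _)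
    -- least N with γ ≤ g N
    obtain ⟨N0, hN0⟩ := hgcof γ hγβ
    have hexN : ∃ N, γ ≤ g N := ⟨N0, hN0.le⟩
    set N := Nat.find hexN with hN
    have hNspec : γ ≤ g N := Nat.find_spec hexN
    have hN1 : 1 ≤ N := by
      rcases Nat.eq_zero_or_pos N with h0 | h1
      · exfalso
        obtain ⟨z, ⟨m, rfl⟩, hzγ⟩ := hne
        have : γ ≤ g 0 := h0 ▸ hNspec
        exact absurd (lt_of_lt_of_le hzγ (this.trans (hgmono.monotone (Nat.zero_le m))))
          (lt_irrefl _)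
      · exact h1
    have hNm : g (N - 1) < γ := by
      have := Nat.find_min hexN (Nat.sub_lt hN1 Nat.one_pos)
      exact not_le.1 this
    have hbound : sSup (Set.range g ∩ Set.Iio γ) ≤ g (N - 1) := by
      refine sSup_le_forall ?_
      rintro z ⟨⟨m, rfl⟩, hzγ⟩
      have hmN : m < N := by
        by_contra hcon
        have : g N ≤ g m := hgmono.monotone (not_lt.1 hcon)
        exact absurd (lt_of_lt_of_le hzγ (hNspec.trans this)) (lt_irrefl _)
      exact hgmono.monotone (Nat.le_sub_one_of_lt hmN)
    rw [← hγeq] at hbound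
    exact absurd (lt_of_le_of_lt hbound hNm) (lt_irrefl _)

/-! ### A chosen bijection from `Iio t.card.ord` onto `Iio t` -/

lemma bChoice_nonempty (t : Ordinal.{0}) :
    Nonempty (↥(Set.Iio t.card.ord) ≃ ↥(Set.Iio t)) := by
  have h1 : #(Set.Iio t.card.ord) = #(Set.Iio t) := by
    rw [Ordinal.mk_Iio_ordinal, Ordinal.mk_Iio_ordinal, Cardinal.card_ord]
  exact Cardinal.eq.1 h1

noncomputable def bChoice (t : Ordinal.{0}) : Ordinal.{0} → Ordinal.{0} :=
  fun ζ => if hζ : ζ < t.card.ord then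
    ((Classical.choice (bChoice_nonempty t)) ⟨ζ, hζ⟩ : ↥(Set.Iio t)) else 0

lemma bChoice_lt {t ζ : Ordinal.{0}} (h : ζ < t.card.ord) : bChoice t ζ < t := by
  rw [bChoice, dif_pos h]
  exact ((Classical.choice (bChoice_nonempty t)) ⟨ζ, h⟩).2

lemma bChoice_surj {t y : Ordinal.{0}} (hy : y < t) :
    ∃ ζ < t.card.ord, bChoice t ζ = y := by
  set e := Classical.choice (bChoice_nonempty t) with he
  have hmem : ((e.symm ⟨y, hy⟩ : ↥(Set.Iio t.card.ord)) : Ordinal) < t.card.ord :=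
    (e.symm ⟨y, hy⟩).2
  refine ⟨(e.symm ⟨y, hy⟩ : ↥(Set.Iio t.card.ord)), hmem, ?_⟩
  rw [bChoice, dif_pos hmem]
  have h2 : (⟨((e.symm ⟨y, hy⟩ : ↥(Set.Iio t.card.ord)) : Ordinal), hmem⟩ :
      ↥(Set.Iio t.card.ord)) = e.symm ⟨y, hy⟩ := Subtype.ext rfl
  rw [← he, h2, e.apply_symm_apply]


/-- A coherent square sequence defined on the singular limit ordinals of a
class `A` containing all singular cardinals and club in every successor
cardinal can be filled out to a Global Square sequence defined on all
singular limit ordinals. -/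
theorem globalSquare_of_square_on_club_class
    (A : Set Ordinal)
    (hsing : ∀ c : Cardinal, Cardinal.aleph0 ≤ c → c.ord.cof < c → c.ord ∈ A)
    (hclub : ∀ κ : Cardinal, Cardinal.aleph0 ≤ κ →
      IsClubIn (A ∩ Set.Iio (Order.succ κ).ord) (Order.succ κ).ord)
    (C : Ordinal → Set Ordinal)
    (hsq : IsCoherentSquare {ν | ν ∈ A ∧ IsSingLimit ν} C) :
    ∃ C' : Ordinal → Set Ordinal, ∀ β, IsSingLimit β →
      (C' β ⊆ Set.Iio β ∧ ClosedIn (C' β) β ∧ UnboundedIn (C' β) β) ∧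
      otype (C' β) < β ∧
      (∀ γ < β, IsLimitPt (C' β) γ → IsSingLimit γ ∧ C' γ = C' β ∩ Set.Iio γ) := by
  classical
  obtain ⟨hsq1, hsq2, hsq3, hsq4⟩ := hsq
  -- choose ladders
  have ladEx : ∀ β : Ordinal.{0}, ∃ L : Set Ordinal.{0},
      (Order.IsSuccLimit β ∧ β.cof = Cardinal.aleph0) →
      (L ⊆ Set.Iio β ∧ sSup L = β ∧ otype L ≤ Ordinal.omega0 ∧
        ∀ γ < β, ¬ IsLimitPt L γ) := by
    intro β
    by_cases h : Order.IsSuccLimit β ∧ β.cof = Cardinal.aleph0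
    · obtain ⟨L, p1, p2, p3, p4⟩ := exists_ladder β h.1 h.2
      exact ⟨L, fun _ => ⟨p1, p2, p3, p4⟩⟩
    · exact ⟨∅, fun hc => absurd hc h⟩
  choose lad hlad using ladEx
  set η : Ordinal → Ordinal := fun β => sSup (A ∩ Set.Iio β) with hη
  set ηf : Ordinal → Ordinal := fun β => max (η β) Ordinal.omega0 with hηf
  set θf : Ordinal → Ordinal := fun β => sInf (A ∩ Set.Ioi β) with hθf
  set C' : Ordinal → Set Ordinal := fun β =>
    if β ∈ A then (if sSup (C β) = β then C β else lad β)
    else Gset (θf β).card.ord (ηf β) (bChoice (θf β)) β with hC'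
  have hA_le_η : ∀ {a β : Ordinal}, a ∈ A → a < β → a ≤ η β := fun {a β} ha hab =>
    le_csSup (bddAbove_of_subset_Iio (fun z hz => hz.2)) ⟨ha, hab⟩
  have hclubU : ∀ κ : Cardinal, Cardinal.aleph0 ≤ κ →
      sSup (A ∩ Set.Iio (Order.succ κ).ord) = (Order.succ κ).ord :=
    fun κ hκ => (hclub κ hκ).2.2
  have hAres : ∀ {κ : Cardinal} {β : Ordinal}, β ≤ (Order.succ κ).ord →
      (A ∩ Set.Iio (Order.succ κ).ord) ∩ Set.Iio β = A ∩ Set.Iio β := by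
    intro κ β hβ; ext z
    constructor
    · rintro ⟨⟨hz1, _⟩, hz3⟩; exact ⟨hz1, hz3⟩
    · rintro ⟨hz1, hz2⟩; exact ⟨⟨hz1, lt_of_lt_of_le hz2 hβ⟩, hz2⟩
  have hAclosed : ∀ {κ : Cardinal} {β : Ordinal}, Cardinal.aleph0 ≤ κ → 0 < β →
      β < (Order.succ κ).ord → sSup (A ∩ Set.Iio β) = β → β ∈ A := by
    intro κ β hκ h0 hβ hsup
    have := (hclub κ hκ).2.1 β hβ ⟨h0, by rw [hAres hβ.le, hsup]⟩
    exact this.1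
  -- every uncountable cardinal is in A
  have hcardA : ∀ κ : Cardinal, Cardinal.aleph0 < κ → κ.ord ∈ A := by
    intro κ hκ
    have hκord : (0 : Ordinal) < κ.ord := by
      rw [Cardinal.lt_ord, Ordinal.card_zero]
      exact lt_of_le_of_lt (by simp) hκ
    have hκsucc : κ.ord < (Order.succ κ).ord := by
      rw [Cardinal.lt_ord, Cardinal.card_ord]
      exact Order.lt_succ κ
    have hsup : sSup (A ∩ Set.Iio κ.ord) = κ.ord := by
      refine le_antisymm (sSup_le_forall fun z hz => hz.2.le) ?_
      by_contra hcon
      set x := sSup (A ∩ Set.Iio κ.ord) with hx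
      have hxκ : x < κ.ord := not_le.1 hcon
      set c := max x.card Cardinal.aleph0 with hc
      have hcκ : c < κ := max_lt (Cardinal.lt_ord.1 hxκ) hκ
      have hcω : Cardinal.aleph0 ≤ c := le_max_right _ _
      have h1 : x < (Order.succ c).ord := Cardinal.lt_ord.2
        (lt_of_le_of_lt (le_max_left _ _) (Order.lt_succ c))
      have h2 : x < sSup (A ∩ Set.Iio (Order.succ c).ord) := by
        rw [hclubU c hcω]; exact h1
      obtain ⟨a, ⟨haA, haord⟩, hxa⟩ := exists_gt_of_lt_sSup h2
      have haκ : a < κ.ord := lt_of_lt_of_le haord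
        (Cardinal.ord_le_ord.2 (Order.succ_le_of_lt hcκ))
      exact absurd (le_csSup (bddAbove_of_subset_Iio (fun z hz => hz.2))
        (show a ∈ A ∩ Set.Iio κ.ord from ⟨haA, haκ⟩)) (not_le.2 hxa)
    exact hAclosed hκ.le hκord hκsucc hsup
  refine ⟨C', ?_⟩
  intro β hβsing
  have hβlim : Order.IsSuccLimit β := hβsing.1
  have hωβ : Ordinal.omega0 < β := by
    have h1 : Cardinal.aleph0 ≤ β.cof := Ordinal.aleph0_le_cof.2 hβlim
    have h2 : Ordinal.omega0 ≤ β.cof.ord := by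
      rw [← Cardinal.ord_aleph0]
      exact Cardinal.ord_le_ord.2 h1
    exact lt_of_le_of_lt h2 hβsing.2
  by_cases hβA : β ∈ A
  · -- β ∈ A, so β ∈ S
    have hβS : β ∈ {ν | ν ∈ A ∧ IsSingLimit ν} := ⟨hβA, hβsing⟩
    by_cases hCβ : sSup (C β) = β
    · -- Rule A : use C β itself
      have hC'β : C' β = C β := by
        rw [hC']; simp only [if_pos hβA, if_pos hCβ]
      obtain ⟨hsub, hclosed, _⟩ := hsq2 β hβS
      refine ⟨⟨by rw [hC'β]; exact hsub, by rw [hC'β]; exact hclosed, by rw [hC'β]; exact hCβ⟩,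
        by rw [hC'β]; exact hsq3 β hβS, ?_⟩
      intro γ hγβ hlp
      rw [hC'β] at hlp
      obtain ⟨hγS, hCγ⟩ := hsq4 β hβS γ hγβ hlp
      have hγunb : sSup (C γ) = γ := by rw [hCγ]; exact hlp.2.symm
      have hC'γ : C' γ = C γ := by
        rw [hC']; simp only [if_pos hγS.1, if_pos hγunb]
      exact ⟨hsq1 γ hγS, by rw [hC'γ, hC'β]; exact hCγ⟩
    · -- Rule B : ladder
      have hcof : β.cof = Cardinal.aleph0 := by
        have hle : β.cof ≤ Cardinal.aleph0 := by
          by_contra hcon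
          exact hCβ ((hsq2 β hβS).2.2 (not_le.1 hcon))
        exact le_antisymm hle (Ordinal.aleph0_le_cof.2 hβlim)
      have hl := hlad β ⟨hβlim, hcof⟩
      have hC'β : C' β = lad β := by
        rw [hC']; simp only [if_pos hβA, if_neg hCβ]
      refine ⟨⟨by rw [hC'β]; exact hl.1, ?_, by rw [hC'β]; exact hl.2.1⟩,
        by rw [hC'β]; exact lt_of_le_of_lt hl.2.2.1 hωβ, ?_⟩
      · intro γ hγβ hlp
        rw [hC'β] at hlp
        exact absurd hlp (hl.2.2.2 γ hγβ)
      · intro γ hγβ hlp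
        rw [hC'β] at hlp
        exact absurd hlp (hl.2.2.2 γ hγβ)
  · -- Rule C : gap case
    have hκω : Cardinal.aleph0 ≤ β.card := Ordinal.aleph0_le_card.2 hωβ.le
    have hβκ : β < (Order.succ β.card).ord := Cardinal.lt_ord.2 (Order.lt_succ β.card)
    -- η β < β
    have hηβ : η β < β := by
      rcases lt_or_eq_of_le (sSup_le_forall (fun z (hz : z ∈ A ∩ Set.Iio β) => hz.2.le) :
        η β ≤ β) with h | h
      · exact h
      · exact absurd (hAclosed hκω hβlim.pos hβκ h) hβA
    have hηfβ : ηf β < β := max_lt hηβ hωβ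
    -- θ
    have hθne : (A ∩ Set.Ioi β).Nonempty := by
      have h2 : β < sSup (A ∩ Set.Iio (Order.succ β.card).ord) := by
        rw [hclubU β.card hκω]; exact hβκ
      obtain ⟨a, ⟨haA, _⟩, hβa⟩ := exists_gt_of_lt_sSup h2
      exact ⟨a, haA, hβa⟩
    have hθmem : θf β ∈ A ∩ Set.Ioi β := csInf_mem hθne
    have hθA : θf β ∈ A := hθmem.1
    have hθβ : β < θf β := hθmem.2
    have hθκ : θf β < (Order.succ β.card).ord := by
      obtain ⟨a, ha⟩ := hθne
      have h2 : β < sSup (A ∩ Set.Iio (Order.succ β.card).ord) := by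
        rw [hclubU β.card hκω]; exact hβκ
      obtain ⟨a', ⟨haA', hasucc'⟩, hβa'⟩ := exists_gt_of_lt_sSup h2
      exact lt_of_le_of_lt (csInf_le (OrderBot.bddBelow _) ⟨haA', hβa'⟩) hasucc'
    have hθcard : (θf β).card ≤ β.card := Order.lt_succ_iff.1 (Cardinal.lt_ord.1 hθκ)
    set μ := (θf β).card.ord with hμ
    have hμlim : Order.IsSuccLimit μ := Cardinal.isSuccLimit_ord
      (Ordinal.aleph0_le_card.2 (hωβ.le.trans hθβ.le))
    have hμηf : μ ≤ ηf β := by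
      rcases eq_or_lt_of_le hκω with hκeq | hκlt
      · have hle : (θf β).card ≤ Cardinal.aleph0 := hθcard.trans hκeq.symm.le
        calc μ ≤ Cardinal.aleph0.ord := Cardinal.ord_le_ord.2 hle
        _ = Ordinal.omega0 := Cardinal.ord_aleph0
        _ ≤ ηf β := le_max_right _ _
      · have hcardA' : β.card.ord ∈ A := hcardA β.card hκlt
        have hcardβ : β.card.ord < β := by
          rcases lt_or_eq_of_le (Cardinal.ord_card_le β) with h | h
          · exact h
          · exact absurd (h ▸ hcardA') hβA
        calc μ ≤ β.card.ord := Cardinal.ord_le_ord.2 hθcard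
        _ ≤ η β := hA_le_η hcardA' hcardβ
        _ ≤ ηf β := le_max_left _ _
    have hb : ∀ ζ < μ, bChoice (θf β) ζ < θf β := fun ζ hζ => bChoice_lt hζ
    have hsur : ∀ y < θf β, ∃ ζ < μ, bChoice (θf β) ζ = y := fun y hy => bChoice_surj hy
    have hC'β : C' β = Gset μ (ηf β) (bChoice (θf β)) β := by
      rw [hC']; simp only [if_neg hβA]; rfl
    refine ⟨⟨?_, ?_, ?_⟩, ?_, ?_⟩
    · rw [hC'β]; exact fun x hx => hx.2.1
    · rw [hC'β]
      intro γ hγ hlp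
      exact Gset_closedIn hμlim hb hsur hθβ hβlim hγ hlp
    · rw [hC'β]; exact Gset_sSup hμlim hb hsur hθβ hβlim hηfβ
    · rw [hC'β]; exact lt_of_le_of_lt (Gset_otype.trans hμηf) hηfβ
    · intro γ hγβ hlp
      rw [hC'β] at hlp
      have hγG : γ ∈ Gset μ (ηf β) (bChoice (θf β)) β :=
        Gset_closedIn hμlim hb hsur hθβ hβlim hγβ hlp
      have hηγ : ηf β < γ := hγG.1
      have hγA : γ ∉ A := by
        intro hmem
        exact absurd (lt_of_le_of_lt ((hA_le_η hmem hγβ).trans (le_max_left _ _)) hηγ)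
          (lt_irrefl γ)
      have hγlim : Order.IsSuccLimit γ := isLimit_of_isLimitPt hlp
      have hγcof : γ.cof.ord < γ := by
        have h1 : γ.cof ≤ μ.card := Gset_cof hμlim hb hsur hθβ hβlim hγβ hlp
        have h2 : γ.cof.ord ≤ μ := by
          calc γ.cof.ord ≤ μ.card.ord := Cardinal.ord_le_ord.2 h1
          _ = μ := by rw [hμ, Cardinal.card_ord]
        exact lt_of_le_of_lt (h2.trans hμηf) hηγ
      have hAIioγ : A ∩ Set.Iio γ = A ∩ Set.Iio β := by
        ext a
        constructor
        · rintro ⟨h1, h2⟩; exact ⟨h1, lt_trans h2 hγβ⟩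
        · rintro ⟨h1, h2⟩
          exact ⟨h1, lt_of_le_of_lt ((hA_le_η h1 h2).trans (le_max_left _ _)) hηγ⟩
      have hηγβ : η γ = η β := by
        show sSup (A ∩ Set.Iio γ) = sSup (A ∩ Set.Iio β)
        rw [hAIioγ]
      have hAIoiγ : A ∩ Set.Ioi γ = A ∩ Set.Ioi β := by
        ext a
        constructor
        · rintro ⟨h1, h2⟩
          refine ⟨h1, ?_⟩
          rcases lt_trichotomy a β with h | h | h
          · exact absurd (lt_of_le_of_lt ((hA_le_η h1 h).trans (le_max_left _ _)) hηγ)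
              (not_lt.2 h2.le)
          · exact absurd (h ▸ h1) hβA
          · exact h
        · rintro ⟨h1, h2⟩; exact ⟨h1, lt_trans hγβ h2⟩
      have hθγβ : θf γ = θf β := by
        show sInf (A ∩ Set.Ioi γ) = sInf (A ∩ Set.Ioi β)
        rw [hAIoiγ]
      have hηfγ : ηf γ = ηf β := by
        show max (η γ) Ordinal.omega0 = max (η β) Ordinal.omega0
        rw [hηγβ]
      have hC'γ : C' γ = Gset (θf γ).card.ord (ηf γ) (bChoice (θf γ)) γ := by
        rw [hC']; simp only [if_neg hγA]
      refine ⟨⟨hγlim, hγcof⟩, ?_⟩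
      rw [hC'γ, hC'β, hθγβ, hηfγ]
      exact Gset_trace hμlim hb hsur hθβ hβlim hγβ hlp
end
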